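/- The inequality θ̲·δB̄·z⁺ + θ̲·δB̲·z⁻ + δB̄·θ − δp ≥ θ̲·δB̄ is valid on P₀ ∪ P₁ ∪ P₂, and hence on conv(P₀ ∪ P₁ ∪ P₂). -/
import Mathlib


abbrev Pt := ℝ × ℝ × ℝ × ℝ × ℝ

def P0 (tl tu : ℝ) : Set Pt :=
  {p | p.1 = 0 ∧ p.2.1 = 0 ∧ p.2.2.1 = 0 ∧ p.2.2.2.2 = 0 ∧ tl ≤ p.2.2.2.1 ∧ p.2.2.2.1 ≤ tu}

def P1 (tu bl bu : ℝ) : Set Pt :=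
  {p | p.1 = 1 ∧ p.2.1 = 1 ∧ p.2.2.1 = 0 ∧ 0 ≤ p.2.2.2.1 ∧ p.2.2.2.1 ≤ tu ∧
    bl * p.2.2.2.1 ≤ p.2.2.2.2 ∧ p.2.2.2.2 ≤ bu * p.2.2.2.1}

def P2 (tl bl bu : ℝ) : Set Pt :=
  {p | p.1 = 1 ∧ p.2.1 = 0 ∧ p.2.2.1 = 1 ∧ tl ≤ p.2.2.2.1 ∧ p.2.2.2.1 ≤ 0 ∧
    bu * p.2.2.2.1 ≤ p.2.2.2.2 ∧ p.2.2.2.2 ≤ bl * p.2.2.2.1}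

theorem stmt_9 (tl tu bl bu : ℝ) (h1 : tl < 0) (h2 : 0 < tu) (h3 : bl < 0) (h4 : 0 < bu) :
    (∀ p ∈ P0 tl tu ∪ P1 tu bl bu ∪ P2 tl bl bu,
      tl * bu * p.2.1 + tl * bl * p.2.2.1 + bu * p.2.2.2.1 - p.2.2.2.2 ≥ tl * bu) ∧
    (∀ p ∈ convexHull ℝ (P0 tl tu ∪ P1 tu bl bu ∪ P2 tl bl bu),
      tl * bu * p.2.1 + tl * bl * p.2.2.1 + bu * p.2.2.2.1 - p.2.2.2.2 ≥ tl * bu) := by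
  have key : ∀ p ∈ P0 tl tu ∪ P1 tu bl bu ∪ P2 tl bl bu,
      tl * bu * p.2.1 + tl * bl * p.2.2.1 + bu * p.2.2.2.1 - p.2.2.2.2 ≥ tl * bu := by
    rintro p ((⟨e1, e2, e3, e4, e5, e6⟩ | ⟨e1, e2, e3, e4, e5, e6, e7⟩) | ⟨e1, e2, e3, e4, e5, e6, e7⟩)
    · rw [e2, e3, e4]; nlinarith
    · rw [e2, e3]; nlinarith
    · rw [e2, e3]; nlinarith
  refine ⟨key, ?_⟩
  have hconv : Convex ℝ {p : Pt |
      tl * bu * p.2.1 + tl * bl * p.2.2.1 + bu * p.2.2.2.1 - p.2.2.2.2 ≥ tl * bu} := by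
    intro x hx y hy a b ha hb hab
    simp only [Set.mem_setOf_eq, Prod.smul_def, Prod.fst_add, Prod.snd_add, smul_eq_mul] at *
    have hsum := add_le_add (mul_le_mul_of_nonneg_left hx ha) (mul_le_mul_of_nonneg_left hy hb)
    have h0 : a * (tl * bu) + b * (tl * bu) = tl * bu := by rw [← add_mul, hab, one_mul]
    nlinarith [hsum]
  exact fun p hp => convexHull_min key hconv hp
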